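/- Let χ₋₄ be the nontrivial Dirichlet character modulo 4 and let α = ord₂(n) be the 2-adic valuation of n. For every positive integer n, Σ_{d² ∣ n} μ(d) Σ_{m ∣ n/d²} χ₋₄(m) m² = (1 − [4∣n]) · χ₋₄(n/2^α) · (n/2^α)² · Π_{p ∣ n prime} (1 + χ₋₄(p)/p²). -/

import Mathlib

open ArithmeticFunction Finset
open scoped ArithmeticFunction.zeta

/-- The nontrivial Dirichlet character modulo 4, as a function on ℕ. -/
def chiFour (m : ℕ) : ℤ :=
  if m % 4 = 1 then 1 else if m % 4 = 3 then -1 else 0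

lemma chiFour_mul (a b : ℕ) : chiFour (a * b) = chiFour a * chiFour b := by
  have h : (a * b) % 4 = (a % 4) * (b % 4) % 4 := Nat.mul_mod a b 4
  have ha : a % 4 = 0 ∨ a % 4 = 1 ∨ a % 4 = 2 ∨ a % 4 = 3 := by omega
  have hb : b % 4 = 0 ∨ b % 4 = 1 ∨ b % 4 = 2 ∨ b % 4 = 3 := by omega
  rcases ha with h1|h1|h1|h1 <;> rcases hb with h2|h2|h2|h2 <;>
    simp [chiFour, h, h1, h2]

lemma chiFour_one : chiFour 1 = 1 := rfl

lemma chiFour_pow (a k : ℕ) : chiFour (a ^ k) = chiFour a ^ k := by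
  induction k with
  | zero => simp [chiFour]
  | succ k ih => rw [pow_succ, pow_succ, chiFour_mul, ih]

noncomputable def Achi : ArithmeticFunction ℝ :=
  ⟨fun m => (chiFour m : ℝ) * (m : ℝ) ^ 2, by simp [chiFour]⟩

lemma Achi_apply (m : ℕ) : Achi m = (chiFour m : ℝ) * (m : ℝ) ^ 2 := rfl

lemma Achi_mult : Achi.IsMultiplicative := by
  refine ⟨by simp [Achi_apply, chiFour], fun {m n} h => ?_⟩
  simp only [Achi_apply, chiFour_mul]
  push_cast
  ring

noncomputable def Msq : ArithmeticFunction ℝ :=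
  ⟨fun k => if (Nat.sqrt k) ^ 2 = k then (ArithmeticFunction.moebius (Nat.sqrt k) : ℝ) else 0,
    by simp⟩

lemma Msq_sq (d : ℕ) : Msq (d ^ 2) = (ArithmeticFunction.moebius d : ℝ) := by
  have h : Nat.sqrt (d ^ 2) = d := Nat.sqrt_eq' d
  simp [Msq, h]

lemma Msq_not_sq {k : ℕ} (h : ¬ IsSquare k) : Msq k = 0 := by
  have : ¬ (Nat.sqrt k) ^ 2 = k := fun hc => h ⟨Nat.sqrt k, by rw [← sq, hc]⟩
  simp [Msq, this]

lemma Msq_mult : Msq.IsMultiplicative := by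
  constructor
  · have : Nat.sqrt 1 = 1 := by simp
    simp [Msq, this]
  · intro m n h
    by_cases hsq : IsSquare (m * n)
    · obtain ⟨r, hr⟩ := hsq
      have hr2 : m * n = r ^ 2 := by rw [hr]; ring
      have hgcd : IsUnit (gcd m n) := by
        rw [Nat.isUnit_iff]; exact h
      obtain ⟨a, ha⟩ := exists_eq_pow_of_mul_eq_pow hgcd hr2
      have hgcd' : IsUnit (gcd n m) := by
        rw [Nat.isUnit_iff]; exact h.symm
      obtain ⟨b, hb⟩ := exists_eq_pow_of_mul_eq_pow hgcd' (by rw [mul_comm]; exact hr2)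
      have hab : Nat.Coprime a b := by
        apply Nat.Coprime.coprime_dvd_left (dvd_pow_self a two_ne_zero)
        apply Nat.Coprime.coprime_dvd_right (dvd_pow_self b two_ne_zero)
        rw [← ha, ← hb]; exact h
      have hmn : m * n = (a * b) ^ 2 := by rw [ha, hb]; ring
      rw [ha, hb, ← mul_pow, Msq_sq, Msq_sq, Msq_sq,
        isMultiplicative_moebius.map_mul_of_coprime hab]
      push_cast; ring
    · rw [Msq_not_sq hsq]
      have : ¬ IsSquare m ∨ ¬ IsSquare n := by
        by_contra hc
        push_neg at hc
        obtain ⟨⟨a, ha⟩, ⟨b, hb⟩⟩ := hc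
        exact hsq ⟨a * b, by rw [ha, hb]; ring⟩
      rcases this with h' | h'
      · rw [Msq_not_sq h', zero_mul]
      · rw [Msq_not_sq h', mul_zero]

noncomputable def Fn : ArithmeticFunction ℝ := Msq * (Achi * ζ)

lemma Fn_mult : Fn.IsMultiplicative :=
  Msq_mult.mul (Achi_mult.mul isMultiplicative_zeta.natCast)

lemma Msq_not_sq' {k : ℕ} (h : ¬ (Nat.sqrt k) ^ 2 = k) : Msq k = 0 := by simp [Msq, h]

lemma gA_apply (k : ℕ) :
    (Achi * ζ : ArithmeticFunction ℝ) k = ∑ m ∈ k.divisors, (chiFour m : ℝ) * (m : ℝ) ^ 2 := by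
  rw [coe_mul_zeta_apply]; rfl

lemma Fn_apply (n : ℕ) :
    Fn n = ∑ k ∈ n.divisors, Msq k * (Achi * ζ : ArithmeticFunction ℝ) (n / k) := by
  rw [Fn, mul_apply,
    Nat.sum_divisorsAntidiagonal (f := fun a b => Msq a * (Achi * ζ : ArithmeticFunction ℝ) b)]

lemma lhs_eq (n : ℕ) (hn : 0 < n) :
    ∑ d ∈ n.divisors.filter (fun d => d ^ 2 ∣ n),
        (ArithmeticFunction.moebius d : ℝ) *
          ∑ m ∈ (n / d ^ 2).divisors, (chiFour m : ℝ) * (m : ℝ) ^ 2 = Fn n := by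
  rw [Fn_apply]
  conv_rhs => rw [← Finset.sum_filter_of_ne (p := fun k => (Nat.sqrt k) ^ 2 = k)
      (fun k _ hne => by by_contra hc; exact hne (by rw [Msq_not_sq' hc, zero_mul]))]
  refine Finset.sum_nbij' (i := fun d => d ^ 2) (j := fun k => Nat.sqrt k) ?_ ?_ ?_ ?_ ?_
  · intro d hd
    simp only [Finset.mem_filter, Nat.mem_divisors] at hd ⊢
    exact ⟨⟨hd.2, hn.ne'⟩, by rw [Nat.sqrt_eq' d]⟩
  · intro k hk
    simp only [Finset.mem_filter, Nat.mem_divisors] at hk ⊢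
    refine ⟨⟨?_, hn.ne'⟩, by rw [hk.2]; exact hk.1.1⟩
    have h1 : Nat.sqrt k ∣ Nat.sqrt k ^ 2 := dvd_pow_self _ two_ne_zero
    rw [hk.2] at h1
    exact h1.trans hk.1.1
  · intro d _; exact Nat.sqrt_eq' d
  · intro k hk
    simp only [Finset.mem_filter] at hk
    exact hk.2
  · intro d _
    rw [Msq_sq, gA_apply]

lemma Msq_prime_pow {p : ℕ} (hp : p.Prime) (i : ℕ) :
    Msq (p ^ i) = (if i = 0 then 1 else 0) - (if i = 2 then 1 else 0) := by
  rcases Nat.even_or_odd i with ⟨j, hj⟩ | hodd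
  · subst hj
    have h1 : p ^ (j + j) = (p ^ j) ^ 2 := by ring
    rw [h1, Msq_sq]
    rcases Nat.eq_zero_or_pos j with hj0 | hj1
    · subst hj0; simp
    · rw [ArithmeticFunction.moebius_apply_prime_pow hp hj1.ne']
      rcases eq_or_ne j 1 with rfl | hj2
      · norm_num
      · have : j + j ≠ 2 := by omega
        simp [hj2, this, hj1.ne']
  · have hns : ¬ IsSquare (p ^ i) := by
      rintro ⟨s, hs⟩
      have hsd : s ∣ p ^ i := ⟨s, hs⟩
      obtain ⟨j, _, rfl⟩ := (Nat.dvd_prime_pow hp).mp hsd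
      have : p ^ i = p ^ (j + j) := by rw [hs]; ring
      have h2 := Nat.pow_right_injective hp.two_le this
      obtain ⟨k, hk⟩ := hodd
      omega
    rw [Msq_not_sq hns]
    have h0 : i ≠ 0 := by rintro rfl; exact (Nat.not_odd_iff_even.mpr (by simp)) hodd
    have h2 : i ≠ 2 := by rintro rfl; exact (Nat.not_odd_iff_even.mpr (by decide)) hodd
    simp [h0, h2]

lemma gA_prime_pow {p : ℕ} (hp : p.Prime) (e : ℕ) :
    (Achi * ζ : ArithmeticFunction ℝ) (p ^ e) =
      ∑ j ∈ Finset.range (e + 1), (chiFour p : ℝ) ^ j * ((p : ℝ) ^ j) ^ 2 := by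
  rw [gA_apply, Nat.sum_divisors_prime_pow hp]
  refine Finset.sum_congr rfl fun j _ => ?_
  rw [chiFour_pow]
  push_cast
  ring

lemma Fn_prime_pow {p : ℕ} (hp : p.Prime) (e : ℕ) :
    Fn (p ^ e) = (Achi * ζ : ArithmeticFunction ℝ) (p ^ e) -
      (if 2 ≤ e then (Achi * ζ : ArithmeticFunction ℝ) (p ^ (e - 2)) else 0) := by
  rw [Fn_apply, Nat.sum_divisors_prime_pow hp]
  have h1 : ∀ i ∈ Finset.range (e + 1),
      Msq (p ^ i) * (Achi * ζ : ArithmeticFunction ℝ) (p ^ e / p ^ i) =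
        (if i = 0 then (Achi * ζ : ArithmeticFunction ℝ) (p ^ (e - i)) else 0) -
        (if i = 2 then (Achi * ζ : ArithmeticFunction ℝ) (p ^ (e - i)) else 0) := by
    intro i hi
    rw [Finset.mem_range] at hi
    rw [Nat.pow_div (by omega) hp.pos, Msq_prime_pow hp, sub_mul]
    congr 1 <;> split <;> simp
  rw [Finset.sum_congr rfl h1, Finset.sum_sub_distrib,
    Finset.sum_ite_eq' (Finset.range (e + 1)) 0
      (fun i => (Achi * ζ : ArithmeticFunction ℝ) (p ^ (e - i))),
    Finset.sum_ite_eq' (Finset.range (e + 1)) 2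
      (fun i => (Achi * ζ : ArithmeticFunction ℝ) (p ^ (e - i)))]
  simp only [Finset.mem_range, Nat.lt_succ_iff, Nat.zero_le, if_true, Nat.sub_zero]

lemma chiFour_two : (chiFour 2 : ℝ) = 0 := by norm_num [chiFour]

lemma gA_two_pow (e : ℕ) : (Achi * ζ : ArithmeticFunction ℝ) (2 ^ e) = 1 := by
  rw [gA_prime_pow Nat.prime_two]
  push_cast [chiFour_two]
  simp only [zero_pow_eq, ite_mul, one_mul, zero_mul,
    Finset.sum_ite_eq' (Finset.range (e + 1)) 0 (fun j => ((2 : ℝ) ^ j) ^ 2)]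
  simp

lemma Fn_two_pow (e : ℕ) : Fn (2 ^ e) = if e ≤ 1 then 1 else 0 := by
  rw [Fn_prime_pow Nat.prime_two, gA_two_pow]
  by_cases h : 2 ≤ e
  · rw [if_pos h, gA_two_pow, if_neg (by omega)]
    ring
  · rw [if_neg h, if_pos (by omega)]
    ring

lemma chiFour_sq_odd {p : ℕ} (hp : p % 2 = 1) : (chiFour p : ℝ) ^ 2 = 1 := by
  have h : p % 4 = 1 ∨ p % 4 = 3 := by omega
  rcases h with h | h <;> simp [chiFour, h]

lemma Fn_odd_prime_pow {p : ℕ} (hp : p.Prime) (hp2 : p ≠ 2) {e : ℕ} (he : 1 ≤ e) :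
    Fn (p ^ e) = Achi (p ^ e) * (1 + (chiFour p : ℝ) / (p : ℝ) ^ 2) := by
  have hodd : p % 2 = 1 := Nat.odd_iff.mp (hp.odd_of_ne_two hp2)
  have hc : (chiFour p : ℝ) ^ 2 = 1 := chiFour_sq_odd hodd
  have hP : (p : ℝ) ≠ 0 := Nat.cast_ne_zero.mpr hp.pos.ne'
  have hA : Achi (p ^ e) = (chiFour p : ℝ) ^ e * ((p : ℝ) ^ e) ^ 2 := by
    rw [Achi_apply, chiFour_pow]
    push_cast
    ring
  rw [Fn_prime_pow hp, hA]
  rcases Nat.lt_or_ge e 2 with h2 | h2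
  · have he1 : e = 1 := by omega
    subst he1
    rw [if_neg (by omega), gA_prime_pow hp, Finset.sum_range_succ, Finset.sum_range_one]
    field_simp
    linear_combination (-1 : ℝ) * hc
  · obtain ⟨k, rfl⟩ : ∃ k, e = k + 2 := ⟨e - 2, by omega⟩
    rw [if_pos h2, gA_prime_pow hp, gA_prime_pow hp]
    rw [show k + 2 + 1 = (k + 1) + 1 + 1 from rfl, Finset.sum_range_succ,
      Finset.sum_range_succ (n := k + 1), Nat.add_sub_cancel]
    have hsum : ∑ j ∈ Finset.range (k + 1), (chiFour p : ℝ) ^ j * ((p : ℝ) ^ j) ^ 2 -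
        ∑ j ∈ Finset.range (k + 1), (chiFour p : ℝ) ^ j * ((p : ℝ) ^ j) ^ 2 = 0 := sub_self _
    field_simp
    ring_nf
    linear_combination (-((chiFour p : ℝ) ^ k * (chiFour p : ℝ) * (p : ℝ) ^ 4 * (p : ℝ) ^ (k * 2))) * hc

lemma Fn_factor {n : ℕ} (hn : n ≠ 0) :
    Fn n = ∏ p ∈ n.primeFactors, Fn (p ^ n.factorization p) := by
  rw [Fn_mult.multiplicative_factorization Fn hn]; rfl

lemma Achi_factor {n : ℕ} (hn : n ≠ 0) :
    Achi n = ∏ p ∈ n.primeFactors, Achi (p ^ n.factorization p) := by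
  rw [Achi_mult.multiplicative_factorization Achi hn]; rfl

theorem stmt_11 (n : ℕ) (hn : 0 < n) :
    ∑ d ∈ n.divisors.filter (fun d => d ^ 2 ∣ n),
        (ArithmeticFunction.moebius d : ℝ) *
          ∑ m ∈ (n / d ^ 2).divisors, (chiFour m : ℝ) * (m : ℝ) ^ 2 =
      (1 - (if 4 ∣ n then 1 else 0)) *
        (chiFour (n / 2 ^ n.factorization 2) : ℝ) *
        ((n / 2 ^ n.factorization 2 : ℕ) : ℝ) ^ 2 *
        ∏ p ∈ n.primeFactors, (1 + (chiFour p : ℝ) / (p : ℝ) ^ 2) := by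
  rw [lhs_eq n hn]
  by_cases h2 : 2 ∣ n
  · have h2m : 2 ∈ n.primeFactors := Nat.mem_primeFactors.mpr ⟨Nat.prime_two, h2, hn.ne'⟩
    set q := n / 2 ^ n.factorization 2 with hq
    have hq0 : q ≠ 0 := (Nat.ordCompl_pos 2 hn.ne').ne'
    have hqfac : q.factorization = n.factorization.erase 2 := Nat.factorization_ordCompl n 2
    have hqpf : q.primeFactors = n.primeFactors.erase 2 := by
      rw [← Nat.support_factorization, hqfac, Finsupp.support_erase, Nat.support_factorization]
    have h4 : (4 ∣ n) ↔ 2 ≤ n.factorization 2 := by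
      rw [show (4 : ℕ) = 2 ^ 2 from rfl]
      exact Nat.Prime.pow_dvd_iff_le_factorization Nat.prime_two hn.ne'
    have hFn : Fn n = Fn (2 ^ n.factorization 2) *
        ∏ p ∈ n.primeFactors.erase 2, Fn (p ^ n.factorization p) := by
      rw [Fn_factor hn.ne', ← Finset.mul_prod_erase _ _ h2m]
    have hprod : ∏ p ∈ n.primeFactors.erase 2, Fn (p ^ n.factorization p) =
        Achi q * ∏ p ∈ n.primeFactors.erase 2, (1 + (chiFour p : ℝ) / (p : ℝ) ^ 2) := by
      have hstep : ∀ p ∈ n.primeFactors.erase 2, Fn (p ^ n.factorization p) =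
          Achi (p ^ n.factorization p) * (1 + (chiFour p : ℝ) / (p : ℝ) ^ 2) := by
        intro p hp
        obtain ⟨hp2, hpm⟩ := Finset.mem_erase.mp hp
        obtain ⟨hpp, hpd, _⟩ := Nat.mem_primeFactors.mp hpm
        exact Fn_odd_prime_pow hpp hp2 (hpp.factorization_pos_of_dvd hn.ne' hpd)
      rw [Finset.prod_congr rfl hstep, Finset.prod_mul_distrib]
      congr 1
      rw [Achi_factor hq0, hqpf]
      refine Finset.prod_congr rfl fun p hp => ?_
      rw [hqfac, Finsupp.erase_ne (Finset.mem_erase.mp hp).1]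
    have hpr2 : ∏ p ∈ n.primeFactors, (1 + (chiFour p : ℝ) / (p : ℝ) ^ 2) =
        ∏ p ∈ n.primeFactors.erase 2, (1 + (chiFour p : ℝ) / (p : ℝ) ^ 2) := by
      rw [← Finset.mul_prod_erase _ _ h2m, chiFour_two]
      norm_num
    rw [hFn, hprod, Fn_two_pow, Achi_apply, hpr2]
    by_cases hle : 2 ≤ n.factorization 2
    · rw [if_neg (by omega), if_pos (h4.mpr hle)]
      ring
    · rw [if_pos (by omega), if_neg (fun hd => hle (h4.mp hd))]
      ring
  · have hα : n.factorization 2 = 0 := Nat.factorization_eq_zero_of_not_dvd h2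
    have h4 : ¬ 4 ∣ n := fun h => h2 (dvd_trans (by norm_num) h)
    have hqn : n / 2 ^ n.factorization 2 = n := by rw [hα, pow_zero, Nat.div_one]
    rw [hqn, if_neg h4]
    have hFn : Fn n = ∏ p ∈ n.primeFactors,
        Achi (p ^ n.factorization p) * (1 + (chiFour p : ℝ) / (p : ℝ) ^ 2) := by
      rw [Fn_factor hn.ne']
      refine Finset.prod_congr rfl fun p hp => ?_
      obtain ⟨hpp, hpd, _⟩ := Nat.mem_primeFactors.mp hp
      have hp2 : p ≠ 2 := fun h => h2 (h ▸ hpd)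
      exact Fn_odd_prime_pow hpp hp2 (hpp.factorization_pos_of_dvd hn.ne' hpd)
    rw [hFn, Finset.prod_mul_distrib, ← Achi_factor hn.ne', Achi_apply]
    ring
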